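/- Assume the identity Σ_ρ 1/ρ = 1 + γ/2 − (1/2)·log(4π), where Σ_ρ denotes the symmetric limit lim_{T→∞} Σ_{ρ : |Im ρ| < T} over the non-trivial zeros ρ of the Riemann zeta function ζ(s) (those with 0 < Re ρ < 1), counted with multiplicity. Then the Riemann Hypothesis (every non-trivial zero ρ of ζ has Re ρ = 1/2) holds if and only if Σ_ρ 1/|ρ|² = 2 + γ − log(4π), where this last series converges absolutely. -/

import Mathlib

open Complex Filter Polynomial Topology
open scoped Classical

noncomputable section

/-- The multiplicity (order of vanishing) of `f` at `ρ`. -/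
def zeroMultiplicity (f : ℂ → ℂ) (ρ : ℂ) : ℕ :=
  if h : AnalyticAt ℂ f ρ then (analyticOrderAt f ρ).toNat else 0

/-- `ρ` is a non-trivial zero of the Riemann zeta function. -/
def IsNontrivialZetaZero (ρ : ℂ) : Prop :=
  riemannZeta ρ = 0 ∧ 0 < ρ.re ∧ ρ.re < 1

/-- The symmetric limit `lim_{T→∞} Σ_{|Im ρ|<T} mult(ρ) • g(ρ)` over the nontrivial
zeros of zeta, counted with multiplicity, has value `v`. -/
def HasZetaZeroSum (g : ℂ → ℂ) (v : ℂ) : Prop :=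
  Tendsto (fun T : ℝ =>
      ∑' ρ : {ρ : ℂ // IsNontrivialZetaZero ρ ∧ |ρ.im| < T},
        (zeroMultiplicity riemannZeta ρ : ℂ) * g ρ) atTop (𝓝 v)

/-- An extended Baker period: an element of the `ℚ̄`-span of `1` together with
logarithms of non-zero algebraic numbers. -/
def ExtendedBakerPeriod (z : ℂ) : Prop :=
  ∃ (n : ℕ) (c : Fin n → ℂ) (a : Fin n → ℂ) (b : ℂ),
    IsAlgebraic ℚ b ∧ (∀ i, IsAlgebraic ℚ (c i)) ∧
    (∀ i, IsAlgebraic ℚ (a i) ∧ a i ≠ 0) ∧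
    z = b + ∑ i, c i * Complex.log (a i)

/-- Schanuel's conjecture: if `a₁,…,aₙ` are `ℚ`-linearly independent complex numbers
then among `a₁,…,aₙ, e^{a₁},…,e^{aₙ}` one can find `n` algebraically independent numbers
(equivalently, the transcendence degree of the field they generate is at least `n`). -/
def SchanuelConjecture : Prop :=
  ∀ (n : ℕ) (a : Fin n → ℂ), LinearIndependent ℚ a →
    ∃ g : Fin n → ℂ,
      (∀ i, g i ∈ Set.range a ∪ Set.range fun i => Complex.exp (a i)) ∧
      AlgebraicIndependent ℚ g

end

open Complex Filter Polynomial Topology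

open Set
open scoped Classical Real

section Helpers

lemma zetaAnalyticAt {s : ℂ} (hs : s ≠ 1) : AnalyticAt ℂ riemannZeta s := by
  have : DifferentiableOn ℂ riemannZeta {(1:ℂ)}ᶜ := fun z hz =>
    (differentiableAt_riemannZeta hz).differentiableWithinAt
  exact this.analyticAt (isOpen_compl_singleton.mem_nhds hs)

lemma zeta_order_ne_top {s : ℂ} (hs : s ≠ 1) : analyticOrderAt riemannZeta s ≠ ⊤ := by
  intro htop
  rw [analyticOrderAt_eq_top] at htop
  have hconn : IsPreconnected ({(1:ℂ)}ᶜ) :=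
    (isConnected_compl_singleton_of_one_lt_rank (rank_real_complex ▸ Nat.one_lt_ofNat) _).isPreconnected
  have hA : AnalyticOnNhd ℂ riemannZeta {(1:ℂ)}ᶜ := fun z hz => zetaAnalyticAt hz
  have h0 : EqOn riemannZeta 0 {(1:ℂ)}ᶜ :=
    hA.eqOn_zero_of_preconnected_of_eventuallyEq_zero hconn hs htop
  have h2 : riemannZeta 2 = 0 := h0 (by norm_num)
  rw [riemannZeta_two] at h2
  have h3 : (Real.pi:ℝ) ^ 2 / 6 = 0 := by exact_mod_cast h2
  have := Real.pi_ne_zero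
  nlinarith [Real.pi_pos]

lemma ntz_ne_one {ρ : ℂ} (hρ : IsNontrivialZetaZero ρ) : ρ ≠ 1 := by
  intro h; rw [h] at hρ; exact absurd hρ.2.2 (by norm_num)

lemma one_sub_ntz {ρ : ℂ} (hρ : IsNontrivialZetaZero ρ) : IsNontrivialZetaZero (1 - ρ) := by
  obtain ⟨hz, h0, h1⟩ := hρ
  refine ⟨?_, by simp [sub_re]; linarith, by simp [sub_re]; linarith⟩
  rw [riemannZeta_one_sub (fun n => ?_) (ntz_ne_one ⟨hz, h0, h1⟩), hz, mul_zero]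
  intro hcon
  have : ρ.re = -(n:ℝ) := by rw [hcon]; simp
  have : (0:ℝ) < -(n:ℝ) := this ▸ h0
  have := n.cast_nonneg (α := ℝ)
  linarith

lemma mult_pos {ρ : ℂ} (hρ : IsNontrivialZetaZero ρ) :
    1 ≤ zeroMultiplicity riemannZeta ρ := by
  have ha := zetaAnalyticAt (ntz_ne_one hρ)
  rw [zeroMultiplicity, dif_pos ha]
  have hne : analyticOrderAt riemannZeta ρ ≠ ⊤ := zeta_order_ne_top (ntz_ne_one hρ)
  have h0 : analyticOrderAt riemannZeta ρ ≠ 0 := by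
    intro h0
    rw [show ((0:ℕ∞)) = ((0:ℕ):ℕ∞) from rfl, ha.analyticOrderAt_eq_natCast] at h0
    obtain ⟨g, hg, hgne, hev⟩ := h0
    have := hev.self_of_nhds
    simp at this
    rw [hρ.1] at this
    exact hgne this.symm
  lift analyticOrderAt riemannZeta ρ to ℕ using hne with n hn
  simpa using Nat.one_le_iff_ne_zero.mpr (by exact_mod_cast h0)


noncomputable def Ffun (s : ℂ) : ℂ :=
  2 * (2 * (π:ℂ)) ^ (-s) * Complex.Gamma s * Complex.cos ((π:ℂ) * s / 2)

lemma F_analyticAt {s : ℂ} (hs : 0 < s.re) : AnalyticAt ℂ Ffun s := by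
  rw [analyticAt_iff_eventually_differentiableAt]
  have hop : IsOpen {z : ℂ | 0 < z.re} := isOpen_lt continuous_const continuous_re
  filter_upwards [hop.eventually_mem hs] with z hz
  have h1 : DifferentiableAt ℂ (fun z : ℂ => (2 * (π:ℂ)) ^ (-z)) z := by
    refine DifferentiableAt.const_cpow (differentiableAt_id.neg) (Or.inl ?_)
    simp only [ne_eq, mul_eq_zero, not_or]
    exact ⟨two_ne_zero, ofReal_ne_zero.mpr Real.pi_ne_zero⟩
  have h2 : DifferentiableAt ℂ Complex.Gamma z :=
    Complex.differentiableAt_Gamma _ (fun m => by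
      intro hcon
      have : z.re = -(m:ℝ) := by rw [hcon]; simp
      have hm := m.cast_nonneg (α := ℝ)
      rw [this] at hz; simp at hz; linarith)
  have h3 : DifferentiableAt ℂ (fun z : ℂ => Complex.cos ((π:ℂ) * z / 2)) z := by
    apply Complex.differentiable_cos.differentiableAt.comp
    fun_prop
  exact ((differentiableAt_const _ |>.mul h1).mul h2).mul h3

lemma F_ne_zero {s : ℂ} (h0 : 0 < s.re) (h1 : s.re < 1) : Ffun s ≠ 0 := by
  have hpi : (π:ℂ) ≠ 0 := ofReal_ne_zero.mpr Real.pi_ne_zero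
  refine mul_ne_zero (mul_ne_zero (mul_ne_zero two_ne_zero ?_) ?_) ?_
  · rw [Ne, cpow_eq_zero_iff]
    rintro ⟨hcon, -⟩
    exact (mul_ne_zero two_ne_zero hpi) hcon
  · exact Complex.Gamma_ne_zero_of_re_pos h0
  · intro hcon
    rw [Complex.cos_eq_zero_iff] at hcon
    obtain ⟨k, hk⟩ := hcon
    have hs : s = 2 * (k:ℂ) + 1 := by
      field_simp at hk
      apply mul_left_cancel₀ hpi
      linear_combination (π:ℂ) * hk
    have : s.re = 2 * (k:ℝ) + 1 := by rw [hs]; simp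
    rw [this] at h0 h1
    have : (0:ℝ) < k + 1 := by linarith
    have : (k:ℝ) < 0 := by linarith
    have h5 : (0:ℤ) < k + 1 := by exact_mod_cast ‹(0:ℝ) < (k:ℝ) + 1›
    have h6 : k < 0 := by exact_mod_cast ‹(k:ℝ) < 0›
    omega

lemma zeta_fe {w : ℂ} (h0 : 0 < w.re) (h1 : w.re < 1) :
    riemannZeta w = Ffun (1 - w) * riemannZeta (1 - w) := by
  have key := riemannZeta_one_sub (s := 1 - w) (fun n => ?_) ?_
  · rw [show (1:ℂ) - (1 - w) = w by ring] at key
    rw [key, Ffun]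
  · intro hcon
    have : 1 - w.re = -(n:ℝ) := by
      have := congrArg Complex.re hcon; simpa using this
    have hm := n.cast_nonneg (α := ℝ); linarith
  · intro hcon
    have : 1 - w.re = 1 := by
      have := congrArg Complex.re hcon; simpa using this
    linarith

lemma mult_one_sub {ρ : ℂ} (hρ : IsNontrivialZetaZero ρ) :
    zeroMultiplicity riemannZeta (1 - ρ) = zeroMultiplicity riemannZeta ρ := by
  have hρ' := one_sub_ntz hρ
  have ha := zetaAnalyticAt (ntz_ne_one hρ)
  have hb := zetaAnalyticAt (ntz_ne_one hρ')
  set n := (analyticOrderAt riemannZeta ρ).toNat with hn_def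
  have hn : analyticOrderAt riemannZeta ρ = (n : ℕ∞) :=
    (ENat.coe_toNat (zeta_order_ne_top (ntz_ne_one hρ))).symm
  obtain ⟨g, hg, hgne, hev⟩ := ha.analyticOrderAt_eq_natCast.mp hn
  have hb_ord : analyticOrderAt riemannZeta (1 - ρ) = (n : ℕ∞) := by
    rw [hb.analyticOrderAt_eq_natCast]
    refine ⟨fun w => (-1) ^ n * (Ffun (1 - w) * g (1 - w)), ?_, ?_, ?_⟩
    · apply analyticAt_const.mul
      have hcomp : AnalyticAt ℂ (fun w : ℂ => (1:ℂ) - w) (1 - ρ) :=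
        analyticAt_const.sub analyticAt_id
      have h1ρ : (1:ℂ) - (1 - ρ) = ρ := by ring
      exact ((F_analyticAt hρ.2.1).comp_of_eq hcomp h1ρ).mul (hg.comp_of_eq hcomp h1ρ)
    · have h1ρ : (1:ℂ) - (1 - ρ) = ρ := by ring
      show (-1:ℂ) ^ n * (Ffun (1 - (1 - ρ)) * g (1 - (1 - ρ))) ≠ 0
      rw [h1ρ]
      exact mul_ne_zero (pow_ne_zero _ (neg_ne_zero.mpr one_ne_zero))
        (mul_ne_zero (F_ne_zero hρ.2.1 hρ.2.2) hgne)
    · have htend : Tendsto (fun w : ℂ => 1 - w) (𝓝 (1 - ρ)) (𝓝 ρ) := by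
        have : Continuous (fun w : ℂ => 1 - w) := by fun_prop
        have := this.tendsto (1 - ρ)
        simpa [show (1:ℂ) - (1 - ρ) = ρ by ring] using this
      have hop : IsOpen {z : ℂ | 0 < z.re ∧ z.re < 1} :=
        (isOpen_lt continuous_const continuous_re).inter
          (isOpen_lt continuous_re continuous_const)
      filter_upwards [htend.eventually hev,
        hop.eventually_mem (⟨hρ'.2.1, hρ'.2.2⟩ : (1-ρ) ∈ {z : ℂ | 0 < z.re ∧ z.re < 1})]
        with w hw hw'
      rw [zeta_fe hw'.1 hw'.2, hw, smul_eq_mul, smul_eq_mul]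
      have : (1 - w - ρ) ^ n = (-1) ^ n * (w - (1 - ρ)) ^ n := by
        rw [← neg_pow, show -(w - (1 - ρ)) = 1 - w - ρ by ring]
      rw [this]; ring
  rw [zeroMultiplicity, zeroMultiplicity, dif_pos ha, dif_pos hb, hb_ord, ← hn]

lemma ntz_ne_zero {ρ : ℂ} (hρ : IsNontrivialZetaZero ρ) : ρ ≠ 0 := by
  intro h; rw [h] at hρ; exact absurd hρ.2.1 (by simp)

lemma ntz_normSq_pos {ρ : ℂ} (hρ : IsNontrivialZetaZero ρ) : 0 < Complex.normSq ρ :=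
  Complex.normSq_pos.mpr (ntz_ne_zero hρ)

lemma pair_formula {ρ : ℂ} (hρ : IsNontrivialZetaZero ρ) :
    (2 * ((zeroMultiplicity riemannZeta ρ : ℝ) * (1 / ρ).re)
        - (zeroMultiplicity riemannZeta ρ : ℝ) * (1 / ‖ρ‖ ^ 2))
      + ((2 * ((zeroMultiplicity riemannZeta (1 - ρ) : ℝ) * (1 / (1 - ρ)).re)
        - (zeroMultiplicity riemannZeta (1 - ρ) : ℝ) * (1 / ‖1 - ρ‖ ^ 2)))
      = -((zeroMultiplicity riemannZeta ρ : ℝ) * (2 * ρ.re - 1) ^ 2)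
          / (Complex.normSq ρ * Complex.normSq (1 - ρ)) := by
  have h1 : IsNontrivialZetaZero (1 - ρ) := one_sub_ntz hρ
  rw [mult_one_sub hρ]
  have hN : 0 < Complex.normSq ρ := ntz_normSq_pos hρ
  have hN' : 0 < Complex.normSq (1 - ρ) := ntz_normSq_pos h1
  rw [one_div ρ, one_div ((1:ℂ) - ρ), Complex.inv_re, Complex.inv_re,
    Complex.sq_norm, Complex.sq_norm]
  have hre : (1 - ρ).re = 1 - ρ.re := by simp [sub_re]
  have hNe : Complex.normSq ρ = ρ.re ^ 2 + ρ.im ^ 2 := by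
    rw [Complex.normSq_apply]; ring
  have hNe' : Complex.normSq (1 - ρ) = (1 - ρ.re) ^ 2 + ρ.im ^ 2 := by
    rw [Complex.normSq_apply]; simp [sub_re, sub_im]; ring
  rw [hre]
  field_simp
  rw [hNe, hNe']
  ring

lemma tendsto_tsum_cutoff {ι : Type*} (em : ι → ℝ) (f : ι → ℝ)
    (hf0 : ∀ x, 0 ≤ f x) (hf : Summable f) :
    Tendsto (fun T : ℝ => ∑' x : {x : ι // |em x| < T}, f x) atTop (𝓝 (∑' x, f x)) := by
  rw [Metric.tendsto_atTop]
  intro ε hε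
  obtain ⟨F, hF⟩ : ∃ F : Finset ι, ∑' x : {x // x ∉ F}, f x < ε :=
    ((tendsto_tsum_compl_atTop_zero f).eventually (gt_mem_nhds hε)).exists
  refine ⟨((F.sup fun x => ⌈|em x|⌉₊ : ℕ) : ℝ) + 1, fun T hT => ?_⟩
  set S : Set ι := {x | |em x| < T} with hS_def
  have hsum_ind : Summable (S.indicator f) :=
    hf.of_nonneg_of_le (fun x => Set.indicator_nonneg (fun y _ => hf0 y) x)
      (fun x => Set.indicator_le_self' (fun y _ => hf0 y) x)
  have hsum_indc : Summable (({x | x ∉ F} : Set ι).indicator f) :=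
    hf.of_nonneg_of_le (fun x => Set.indicator_nonneg (fun y _ => hf0 y) x)
      (fun x => Set.indicator_le_self' (fun y _ => hf0 y) x)
  have hsub : ∀ x : ι, x ∉ S → x ∉ F := by
    intro x hx hxF
    apply hx
    have h1 : |em x| ≤ (⌈|em x|⌉₊ : ℝ) := Nat.le_ceil _
    have h2 : (⌈|em x|⌉₊ : ℕ) ≤ F.sup fun x => ⌈|em x|⌉₊ := Finset.le_sup (f := fun x => ⌈|em x|⌉₊) hxF
    have h3 : ((⌈|em x|⌉₊ : ℕ) : ℝ) ≤ ((F.sup fun x => ⌈|em x|⌉₊ : ℕ) : ℝ) := by exact_mod_cast h2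
    show |em x| < T
    linarith
  have heq1 : (∑' x : {x : ι // |em x| < T}, f x) = ∑' x, S.indicator f x := tsum_subtype S f
  have heq2 : (∑' x : {x // x ∉ F}, f x) = ∑' x, ({x | x ∉ F} : Set ι).indicator f x :=
    tsum_subtype _ f
  have hle1 : ∑' x, S.indicator f x ≤ ∑' x, f x :=
    Summable.tsum_le_tsum (fun x => Set.indicator_le_self' (fun y _ => hf0 y) x) hsum_ind hf
  have hdiff : ∑' x, f x - ∑' x, S.indicator f x = ∑' x, (f x - S.indicator f x) :=
    (Summable.tsum_sub hf hsum_ind).symm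
  have hptw : ∀ x, f x - S.indicator f x ≤ ({x | x ∉ F} : Set ι).indicator f x := by
    intro x
    by_cases hx : x ∈ S
    · simp [Set.indicator_of_mem hx, Set.indicator_nonneg (fun y _ => hf0 y)]
    · rw [Set.indicator_of_notMem hx,
        Set.indicator_of_mem (show x ∈ ({x | x ∉ F} : Set ι) from hsub x hx)]
      simp
  have hsum_diff : Summable (fun x => f x - S.indicator f x) := hf.sub hsum_ind
  have hle2 : ∑' x, (f x - S.indicator f x) ≤ ∑' x, ({x | x ∉ F} : Set ι).indicator f x :=
    Summable.tsum_le_tsum hptw hsum_diff hsum_indc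
  rw [Real.dist_eq, heq1]
  rw [abs_sub_comm, _root_.abs_of_nonneg (by linarith)]
  calc ∑' x, f x - ∑' x, S.indicator f x ≤ ∑' x, ({x | x ∉ F} : Set ι).indicator f x := by
        rw [hdiff]; exact hle2
    _ = ∑' x : {x // x ∉ F}, f x := heq2.symm
    _ < ε := hF

end Helpers

/-- Assuming `Σ_ρ 1/ρ = 1 + γ/2 − (1/2)log(4π)` (symmetric limit over nontrivial
zeros with multiplicity), the Riemann Hypothesis holds iff
`Σ_ρ 1/|ρ|² = 2 + γ − log(4π)`. -/
theorem rh_iff_sum_inv_abs_sq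
    (h : HasZetaZeroSum (fun ρ => 1 / ρ)
      (((1 : ℝ) + Real.eulerMascheroniConstant / 2 - Real.log (4 * Real.pi) / 2 : ℝ) : ℂ))
    (hsum : Summable (fun ρ : {ρ : ℂ // IsNontrivialZetaZero ρ} =>
      (zeroMultiplicity riemannZeta ρ : ℝ) * (1 / ‖(ρ : ℂ)‖ ^ 2))) :
    (∀ ρ : ℂ, IsNontrivialZetaZero ρ → ρ.re = 1 / 2) ↔
      (∑' ρ : {ρ : ℂ // IsNontrivialZetaZero ρ},
          (zeroMultiplicity riemannZeta ρ : ℝ) * (1 / ‖(ρ : ℂ)‖ ^ 2))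
        = 2 + Real.eulerMascheroniConstant - Real.log (4 * Real.pi) := by
  classical
  set γ : ℝ := Real.eulerMascheroniConstant with hγ
  set L : ℝ := Real.log (4 * Real.pi) with hL
  set C : ℝ := 1 + γ / 2 - L / 2 with hC_def
  set m : ℂ → ℝ := fun ρ => (zeroMultiplicity riemannZeta ρ : ℝ) with hm_def
  set w : {ρ : ℂ // IsNontrivialZetaZero ρ} → ℝ :=
    fun x => m x * (1 / ‖(x : ℂ)‖ ^ 2) with hw_def
  set r : {ρ : ℂ // IsNontrivialZetaZero ρ} → ℝ :=
    fun x => m x * (1 / (x : ℂ)).re with hr_def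
  have hm0 : ∀ ρ : ℂ, 0 ≤ m ρ := fun ρ => Nat.cast_nonneg _
  have hNpos : ∀ x : {ρ : ℂ // IsNontrivialZetaZero ρ}, 0 < Complex.normSq (x : ℂ) :=
    fun x => ntz_normSq_pos x.2
  have hre_eq : ∀ z : ℂ, (1 / z).re = z.re / Complex.normSq z := by
    intro z; rw [one_div, Complex.inv_re]
  have habs_eq : ∀ z : ℂ, 1 / ‖z‖ ^ 2 = 1 / Complex.normSq z := by
    intro z; rw [Complex.sq_norm]
  have hr_nonneg : ∀ x, 0 ≤ r x := by
    intro x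
    refine mul_nonneg (hm0 _) ?_
    rw [hre_eq]
    exact div_nonneg (le_of_lt x.2.2.1) (le_of_lt (hNpos x))
  have hr_le : ∀ x, r x ≤ w x := by
    intro x
    refine mul_le_mul_of_nonneg_left ?_ (hm0 _)
    rw [hre_eq, habs_eq]
    gcongr
    · exact (hNpos x).le
    · exact le_of_lt x.2.2.2
  have hr_summ : Summable r := hsum.of_nonneg_of_le hr_nonneg hr_le
  -- Step 1: the real parts of the symmetric sums converge to ∑' r, hence ∑' r = C
  have hrC : ∑' x, r x = C := by
    have limit1 : Tendsto (fun T : ℝ =>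
        ∑' x : {x : {ρ : ℂ // IsNontrivialZetaZero ρ} // |(x : ℂ).im| < T}, r x)
        atTop (𝓝 (∑' x, r x)) :=
      tendsto_tsum_cutoff (fun x : {ρ : ℂ // IsNontrivialZetaZero ρ} => (x : ℂ).im) r hr_nonneg hr_summ
    have limit2 : Tendsto (fun T : ℝ =>
        ∑' x : {x : {ρ : ℂ // IsNontrivialZetaZero ρ} // |(x : ℂ).im| < T}, r x)
        atTop (𝓝 C) := by
      have hre_cont := (Complex.continuous_re.tendsto _).comp h
      simp only [Function.comp_def, Complex.ofReal_re] at hre_cont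
      refine hre_cont.congr ?_
      intro T
      -- summability of restricted complex sums
      have hwq : Summable (fun ρ : {ρ : ℂ // IsNontrivialZetaZero ρ ∧ |ρ.im| < T} =>
          m ρ * (1 / ‖(ρ : ℂ)‖ ^ 2)) := by
        have h1 : Summable (fun x : {x : {ρ : ℂ // IsNontrivialZetaZero ρ} //
            x ∈ {y : {ρ : ℂ // IsNontrivialZetaZero ρ} | |(y : ℂ).im| < T}} => w x) :=
          hsum.subtype _
        exact (Equiv.summable_iff
          (Equiv.subtypeSubtypeEquivSubtypeInter IsNontrivialZetaZero
            (fun ρ => |ρ.im| < T))).mp h1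
      have hcs : Summable (fun ρ : {ρ : ℂ // IsNontrivialZetaZero ρ ∧ |ρ.im| < T} =>
          (zeroMultiplicity riemannZeta (ρ : ℂ) : ℂ) * (1 / (ρ : ℂ))) := by
        apply Summable.of_norm
        refine Summable.of_nonneg_of_le (fun ρ => norm_nonneg _)
          (fun ρ => ?_) (hwq.mul_left (Real.sqrt (1 + T ^ 2)))
        have habs_pos : 0 < ‖(ρ : ℂ)‖ :=
          norm_pos_iff.mpr (ntz_ne_zero ρ.2.1)
        have hb : ‖(ρ : ℂ)‖ ≤ Real.sqrt (1 + T ^ 2) := by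
          rw [Complex.norm_def]
          apply Real.sqrt_le_sqrt
          rw [Complex.normSq_apply]
          have h1 : (ρ : ℂ).re * (ρ : ℂ).re ≤ 1 :=
            mul_le_one₀ (le_of_lt ρ.2.1.2.2) (le_of_lt ρ.2.1.2.1) (le_of_lt ρ.2.1.2.2)
          have h2 : (ρ : ℂ).im * (ρ : ℂ).im < T ^ 2 := by
            have := ρ.2.2
            nlinarith [abs_nonneg (ρ : ℂ).im, _root_.sq_abs (ρ : ℂ).im]
          linarith
        have hnorm : ‖(zeroMultiplicity riemannZeta (ρ : ℂ) : ℂ) * (1 / (ρ : ℂ))‖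
            = m (ρ : ℂ) * ‖(ρ : ℂ)‖⁻¹ := by
          rw [norm_mul, norm_div, norm_one, one_div]
          congr 1
          rw [hm_def]; simp
        rw [hnorm]
        have h2 : ‖(ρ : ℂ)‖⁻¹
            ≤ Real.sqrt (1 + T ^ 2) * (1 / ‖(ρ : ℂ)‖ ^ 2) := by
          rw [inv_eq_one_div, mul_one_div, div_le_div_iff₀ habs_pos (pow_pos habs_pos 2)]
          nlinarith [habs_pos, hb]
        calc m (ρ : ℂ) * ‖(ρ : ℂ)‖⁻¹
            ≤ m (ρ : ℂ) * (Real.sqrt (1 + T ^ 2) * (1 / ‖(ρ : ℂ)‖ ^ 2)) :=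
              mul_le_mul_of_nonneg_left h2 (hm0 _)
          _ = Real.sqrt (1 + T ^ 2) * (m (ρ : ℂ) * (1 / ‖(ρ : ℂ)‖ ^ 2)) := by
              ring
      -- identify the real part of the complex sum
      rw [Complex.re_tsum hcs]
      have : ∀ ρ : {ρ : ℂ // IsNontrivialZetaZero ρ ∧ |ρ.im| < T},
          ((zeroMultiplicity riemannZeta (ρ : ℂ) : ℂ) * (1 / (ρ : ℂ))).re
            = m ρ * (1 / (ρ : ℂ)).re := by
        intro ρ
        simp [Complex.mul_re]
        left; rfl
      rw [tsum_congr this]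
      exact (Equiv.tsum_eq
        (Equiv.subtypeSubtypeEquivSubtypeInter IsNontrivialZetaZero (fun ρ => |ρ.im| < T))
        (fun ρ : {ρ : ℂ // IsNontrivialZetaZero ρ ∧ |ρ.im| < T} =>
          m ρ * (1 / (ρ : ℂ)).re)).symm
    exact tendsto_nhds_unique limit1 limit2
  constructor
  · -- RH implies the sum formula
    intro hRH
    have hpoint : ∀ x : {ρ : ℂ // IsNontrivialZetaZero ρ}, w x = 2 * r x := by
      intro x
      rw [hw_def, hr_def]
      simp only []
      rw [hre_eq, habs_eq, hRH x.1 x.2]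
      ring
    calc ∑' x, w x = ∑' x, 2 * r x := tsum_congr hpoint
      _ = 2 * ∑' x, r x := tsum_mul_left
      _ = 2 * C := by rw [hrC]
      _ = 2 + γ - L := by rw [hC_def]; ring
  · -- the sum formula implies RH
    intro hS
    by_contra hcon
    push_neg at hcon
    obtain ⟨ρ0, hρ0, hne⟩ := hcon
    set i : {ρ : ℂ // IsNontrivialZetaZero ρ} → {ρ : ℂ // IsNontrivialZetaZero ρ} :=
      fun x => ⟨1 - (x : ℂ), one_sub_ntz x.2⟩ with hi_def
    have hinv : Function.Involutive i := by
      intro x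
      apply Subtype.ext
      show (1 : ℂ) - (1 - (x : ℂ)) = (x : ℂ)
      ring
    set e := hinv.toPerm with he_def
    set t : {ρ : ℂ // IsNontrivialZetaZero ρ} → ℝ := fun x => 2 * r x - w x with ht_def
    have ht : Summable t := (hr_summ.mul_left 2).sub hsum
    have hts : ∑' x, t x = 0 := by
      rw [ht_def]
      rw [Summable.tsum_sub (hr_summ.mul_left 2) hsum, tsum_mul_left, hrC, hS, hC_def]
      ring
    have hte : Summable (t ∘ e) := (Equiv.summable_iff e).mpr ht
    have htes : ∑' x, t (e x) = 0 := by
      rw [Equiv.tsum_eq e t, hts]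
    have hpair : ∀ x : {ρ : ℂ // IsNontrivialZetaZero ρ},
        t x + t (e x) = -(m x * (2 * (x : ℂ).re - 1) ^ 2)
          / (Complex.normSq (x : ℂ) * Complex.normSq (1 - (x : ℂ))) :=
      fun x => pair_formula x.2
    have hpair_le : ∀ x, t x + t (e x) ≤ 0 := by
      intro x
      rw [hpair x]
      apply div_nonpos_of_nonpos_of_nonneg
      · simp only [neg_nonpos]
        positivity
      · exact le_of_lt (mul_pos (ntz_normSq_pos x.2) (ntz_normSq_pos (one_sub_ntz x.2)))
    set x0 : {ρ : ℂ // IsNontrivialZetaZero ρ} := ⟨ρ0, hρ0⟩ with hx0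
    have hstrict : t x0 + t (e x0) < 0 := by
      rw [hpair x0]
      apply div_neg_of_neg_of_pos
      · rw [neg_lt_zero]
        apply mul_pos
        · show (0:ℝ) < (zeroMultiplicity riemannZeta ρ0 : ℝ)
          exact_mod_cast (mult_pos hρ0 : 0 < zeroMultiplicity riemannZeta ρ0)
        · have hnz : 2 * ρ0.re - 1 ≠ 0 := by
            intro hc; apply hne; linarith
          exact lt_of_le_of_ne (sq_nonneg _) (Ne.symm (pow_ne_zero 2 hnz))
      · exact mul_pos (ntz_normSq_pos hρ0) (ntz_normSq_pos (one_sub_ntz hρ0))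
    have hu_summ : Summable (fun x => -(t x + t (e x))) := ((ht.add hte).neg)
    have hu_sum : ∑' x, -(t x + t (e x)) = 0 := by
      have hadd := Summable.tsum_add ht (show Summable (fun x => t (e x)) from hte)
      rw [tsum_neg, hadd, hts, htes, add_zero, neg_zero]
    have hle := Summable.le_tsum hu_summ x0 (fun j _ => neg_nonneg.mpr (hpair_le j))
    rw [hu_sum] at hle
    linarith [hstrict]
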